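/- The reformulated problem max { πᵀ(F z* − d) + aᵀκ : A x ≤ a, Eᵀπ = 0, 0 ≤ π ≤ 1, Dᵀπ = Aᵀκ, κᵀ(a − A x) = 0, κ ≥ 0 } has the same optimal value as the bilinear problem max { πᵀ(F z* − d) + πᵀ D x : A x ≤ a, Eᵀπ = 0, 0 ≤ π ≤ 1 }, provided the latter has a finite optimum and for each feasible π the inner maximization over x attains its optimum. -/

import Mathlib

open Matrix BigOperators

/-- Farkas' lemma, algebraic induction form. -/
lemma farkas_aux {n : ℕ} {ι : Type*} [DecidableEq ι] (S : Finset ι)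
    (v : ι → (Fin n → ℝ)) (c : Fin n → ℝ) :
    (∃ κ : ι → ℝ, (∀ i, 0 ≤ κ i) ∧ (∀ i ∉ S, κ i = 0) ∧ c = ∑ i ∈ S, κ i • v i) ∨
    (∃ y : Fin n → ℝ, (∀ i ∈ S, v i ⬝ᵥ y ≤ 0) ∧ 0 < c ⬝ᵥ y) := by
  induction S using Finset.induction_on generalizing v c with
  | empty =>
    by_cases hc : c = 0
    · exact Or.inl ⟨0, fun i => le_rfl, fun i _ => rfl, by simp [hc]⟩
    · refine Or.inr ⟨c, by simp, ?_⟩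
      have h1 : 0 ≤ c ⬝ᵥ c := Finset.sum_nonneg fun i _ => mul_self_nonneg _
      have h2 : c ⬝ᵥ c ≠ 0 := fun h => hc (dotProduct_self_eq_zero.mp h)
      exact lt_of_le_of_ne h1 (Ne.symm h2)
  | insert j S hj ih =>
    rcases ih v c with ⟨κ, hκ0, hκs, hκc⟩ | ⟨y, hy, hcy⟩
    · refine Or.inl ⟨κ, hκ0, fun i hi => hκs i (fun h => hi (Finset.mem_insert_of_mem h)), ?_⟩
      rw [Finset.sum_insert hj, hκs j hj, zero_smul, zero_add]
      exact hκc
    · by_cases hvj : v j ⬝ᵥ y ≤ 0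
      · refine Or.inr ⟨y, ?_, hcy⟩
        intro i hi
        rcases Finset.mem_insert.mp hi with rfl | hi
        · exact hvj
        · exact hy i hi
      · push_neg at hvj
        have ht0 : v j ⬝ᵥ y ≠ 0 := ne_of_gt hvj
        set t := v j ⬝ᵥ y with ht
        set v' : ι → (Fin n → ℝ) := fun i => v i - ((v i ⬝ᵥ y) / t) • v j with hv'
        set c' : Fin n → ℝ := c - ((c ⬝ᵥ y) / t) • v j with hc'
        rcases ih v' c' with ⟨κ, hκ0, hκs, hκc⟩ | ⟨y', hy', hcy'⟩
        · -- c is in the cone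
          set μ : ℝ := (c ⬝ᵥ y) / t - ∑ i ∈ S, κ i * ((v i ⬝ᵥ y) / t) with hμ
          have hμ0 : 0 ≤ μ := by
            have h1 : 0 < (c ⬝ᵥ y) / t := div_pos hcy hvj
            have h2 : ∑ i ∈ S, κ i * ((v i ⬝ᵥ y) / t) ≤ 0 := by
              apply Finset.sum_nonpos
              intro i hi
              exact mul_nonpos_of_nonneg_of_nonpos (hκ0 i)
                (div_nonpos_of_nonpos_of_nonneg (hy i hi) (le_of_lt hvj))
            rw [hμ]; linarith
          refine Or.inl ⟨Function.update κ j μ, ?_, ?_, ?_⟩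
          · intro i
            by_cases h : i = j
            · subst h; rw [Function.update_self]; exact hμ0
            · rw [Function.update_of_ne h]; exact hκ0 i
          · intro i hi
            have h1 : i ≠ j := by rintro rfl; exact hi (Finset.mem_insert_self i S)
            have h2 : i ∉ S := fun h => hi (Finset.mem_insert_of_mem h)
            rw [Function.update_of_ne h1]; exact hκs i h2
          · rw [Finset.sum_insert hj]
            have hsum : ∀ i ∈ S, (Function.update κ j μ) i • v i = κ i • v i := by
              intro i hi
              have h1 : i ≠ j := by rintro rfl; exact hj hi
              rw [Function.update_of_ne h1]
            rw [Finset.sum_congr rfl hsum, Function.update_self]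
            have this1 := hκc
            rw [hc'] at this1
            have hexp : ∀ i ∈ S, κ i • v' i = κ i • v i - (κ i * ((v i ⬝ᵥ y) / t)) • v j := by
              intro i _
              rw [hv']; dsimp only
              rw [smul_sub, smul_smul]
            rw [Finset.sum_congr rfl hexp, Finset.sum_sub_distrib, ← Finset.sum_smul] at this1
            rw [hμ]
            have h3 := sub_eq_iff_eq_add.mp this1
            linear_combination (norm := module) h3
        · -- separating hyperplane
          set y'' : Fin n → ℝ := y' - ((v j ⬝ᵥ y') / t) • y with hy''
          have hcompute : ∀ w : Fin n → ℝ, w ⬝ᵥ y'' = w ⬝ᵥ y' - ((v j ⬝ᵥ y') / t) * (w ⬝ᵥ y) := by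
            intro w
            rw [hy'', dotProduct_sub, dotProduct_smul, smul_eq_mul]
          have hcompute' : ∀ w : Fin n → ℝ,
              (w - ((w ⬝ᵥ y) / t) • v j) ⬝ᵥ y' = w ⬝ᵥ y' - ((w ⬝ᵥ y) / t) * (v j ⬝ᵥ y') := by
            intro w
            rw [sub_dotProduct, smul_dotProduct, smul_eq_mul]
          refine Or.inr ⟨y'', ?_, ?_⟩
          · intro i hi
            rcases Finset.mem_insert.mp hi with rfl | hi
            · rw [hcompute, ← ht]
              rw [div_mul_cancel₀ _ ht0]
              simp
            · have h1 := hy' i hi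
              rw [hv'] at h1; dsimp only at h1
              rw [hcompute' (v i)] at h1
              rw [hcompute (v i)]
              have : (v j ⬝ᵥ y') / t * (v i ⬝ᵥ y) = (v i ⬝ᵥ y) / t * (v j ⬝ᵥ y') := by ring
              rw [this]; exact h1
          · have h1 := hcy'
            rw [hc'] at h1
            rw [hcompute' c] at h1
            rw [hcompute c]
            have : (v j ⬝ᵥ y') / t * (c ⬝ᵥ y) = (c ⬝ᵥ y) / t * (v j ⬝ᵥ y') := by ring
            rw [this]; exact h1

/-- LP duality: an optimal solution of `max c⬝x s.t. Ax ≤ a` admits a KKT multiplier. -/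
lemma exists_kkt {m n : ℕ} (A : Matrix (Fin m) (Fin n) ℝ) (a : Fin m → ℝ) (c : Fin n → ℝ)
    (x : Fin n → ℝ) (hx : A.mulVec x ≤ a)
    (hopt : ∀ x' : Fin n → ℝ, A.mulVec x' ≤ a → c ⬝ᵥ x' ≤ c ⬝ᵥ x) :
    ∃ κ : Fin m → ℝ, 0 ≤ κ ∧ A.transpose.mulVec κ = c ∧ κ ⬝ᵥ (a - A.mulVec x) = 0 := by
  classical
  set S : Finset (Fin m) := Finset.univ.filter (fun i => A.mulVec x i = a i) with hS
  have hrow : ∀ (i : Fin m) (w : Fin n → ℝ), (A i) ⬝ᵥ w = A.mulVec w i := fun i w => rfl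
  rcases farkas_aux S (fun i => A i) c with ⟨κ, hκ0, hκs, hκc⟩ | ⟨y, hy, hcy⟩
  · refine ⟨κ, hκ0, ?_, ?_⟩
    · funext j
      have : c j = ∑ i ∈ S, κ i * A i j := by
        rw [hκc]; simp [Finset.sum_apply]
      rw [this]
      rw [Matrix.mulVec, ]
      show (fun k => Aᵀ j k) ⬝ᵥ κ = _
      rw [dotProduct]
      rw [← Finset.sum_subset (Finset.subset_univ S)]
      · apply Finset.sum_congr rfl
        intro i _
        simp [Matrix.transpose_apply, mul_comm]
      · intro i _ hi
        simp [hκs i hi]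
    · rw [dotProduct]
      apply Finset.sum_eq_zero
      intro i _
      by_cases hi : i ∈ S
      · have : A.mulVec x i = a i := (Finset.mem_filter.mp hi).2
        simp [this]
      · simp [hκs i hi]
  · -- contradiction with optimality
    exfalso
    set g : Fin m → ℝ := fun i => if A.mulVec y i ≤ 0 then 1 else (a i - A.mulVec x i) / A.mulVec y i with hg
    set s : Finset ℝ := insert (1:ℝ) (Finset.univ.image g) with hs
    have hsne : s.Nonempty := ⟨1, Finset.mem_insert_self _ _⟩
    set ε : ℝ := s.min' hsne with hε
    have hgpos : ∀ i, 0 < g i := by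
      intro i
      rw [hg]; dsimp only
      split
      · norm_num
      · rename_i h
        push_neg at h
        apply div_pos _ h
        have hiS : i ∉ S := by
          intro hiS
          have h4 := hy i hiS
          rw [hrow] at h4
          linarith
        have hlt : A.mulVec x i ≠ a i := by
          intro heq; exact hiS (Finset.mem_filter.mpr ⟨Finset.mem_univ i, heq⟩)
        have h5 : A.mulVec x i < a i := lt_of_le_of_ne (hx i) hlt
        linarith
    have hεpos : 0 < ε := by
      rw [hε, Finset.lt_min'_iff]
      intro b hb
      rcases Finset.mem_insert.mp hb with rfl | hb
      · norm_num
      · rcases Finset.mem_image.mp hb with ⟨i, _, rfl⟩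
        exact hgpos i
    have hεle : ∀ i, ε ≤ g i := fun i =>
      Finset.min'_le s (g i) (Finset.mem_insert_of_mem (Finset.mem_image_of_mem g (Finset.mem_univ i)))
    have hfeas : A.mulVec (x + ε • y) ≤ a := by
      intro i
      rw [Matrix.mulVec_add, Matrix.mulVec_smul]
      simp only [Pi.add_apply, Pi.smul_apply, smul_eq_mul]
      by_cases hyi : A.mulVec y i ≤ 0
      · have h1 := hx i
        nlinarith
      · push_neg at hyi
        have h2 := hεle i
        rw [hg] at h2; dsimp only at h2
        rw [if_neg (not_le.mpr hyi)] at h2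
        have : ε * A.mulVec y i ≤ a i - A.mulVec x i := by
          rw [div_eq_mul_inv] at h2
          calc ε * A.mulVec y i ≤ (a i - A.mulVec x i) * (A.mulVec y i)⁻¹ * A.mulVec y i := by
                apply mul_le_mul_of_nonneg_right h2 (le_of_lt hyi)
            _ = a i - A.mulVec x i := by field_simp
        linarith
    have := hopt (x + ε • y) hfeas
    rw [dotProduct_add, dotProduct_smul, smul_eq_mul] at this
    nlinarith

/-- The KKT-based reformulation (16) of SP2 has the same optimal value as the bilinear
problem max {πᵀ(Fz* − d) + πᵀDx : Ax ≤ a, Eᵀπ = 0, 0 ≤ π ≤ 1}, provided the latter has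
a finite optimum and the inner maximization over x attains its optimum for each feasible π. -/
theorem SP2_reformulation_same_value {m n p q r : ℕ}
    (A : Matrix (Fin m) (Fin n) ℝ) (D : Matrix (Fin p) (Fin n) ℝ)
    (E : Matrix (Fin p) (Fin q) ℝ) (F : Matrix (Fin p) (Fin r) ℝ)
    (a : Fin m → ℝ) (d : Fin p → ℝ) (z : Fin r → ℝ) (hz : ∀ i, z i = 0 ∨ z i = 1)
    (hne : ∃ x : Fin n → ℝ, A.mulVec x ≤ a)
    (hattain : ∀ π : Fin p → ℝ, E.transpose.mulVec π = 0 → 0 ≤ π → π ≤ 1 →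
      ∃ x : Fin n → ℝ, A.mulVec x ≤ a ∧
        IsGreatest {w : ℝ | ∃ x' : Fin n → ℝ, A.mulVec x' ≤ a ∧ w = π ⬝ᵥ D.mulVec x'}
          (π ⬝ᵥ D.mulVec x))
    (hfin : ∃ v : ℝ, IsGreatest {v : ℝ | ∃ (x : Fin n → ℝ) (π : Fin p → ℝ),
        A.mulVec x ≤ a ∧ E.transpose.mulVec π = 0 ∧ 0 ≤ π ∧ π ≤ 1 ∧
        v = π ⬝ᵥ (F.mulVec z - d) + π ⬝ᵥ D.mulVec x} v) :
    sSup {v : ℝ | ∃ (x : Fin n → ℝ) (π : Fin p → ℝ) (κ : Fin m → ℝ),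
        A.mulVec x ≤ a ∧ E.transpose.mulVec π = 0 ∧ 0 ≤ π ∧ π ≤ 1 ∧
        D.transpose.mulVec π = A.transpose.mulVec κ ∧
        κ ⬝ᵥ (a - A.mulVec x) = 0 ∧ 0 ≤ κ ∧
        v = π ⬝ᵥ (F.mulVec z - d) + a ⬝ᵥ κ}
      = sSup {v : ℝ | ∃ (x : Fin n → ℝ) (π : Fin p → ℝ),
        A.mulVec x ≤ a ∧ E.transpose.mulVec π = 0 ∧ 0 ≤ π ∧ π ≤ 1 ∧
        v = π ⬝ᵥ (F.mulVec z - d) + π ⬝ᵥ D.mulVec x} := by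
  obtain ⟨vstar, hvmem, hvub⟩ := hfin
  set Sb := {v : ℝ | ∃ (x : Fin n → ℝ) (π : Fin p → ℝ),
        A.mulVec x ≤ a ∧ E.transpose.mulVec π = 0 ∧ 0 ≤ π ∧ π ≤ 1 ∧
        v = π ⬝ᵥ (F.mulVec z - d) + π ⬝ᵥ D.mulVec x} with hSb
  set Sr := {v : ℝ | ∃ (x : Fin n → ℝ) (π : Fin p → ℝ) (κ : Fin m → ℝ),
        A.mulVec x ≤ a ∧ E.transpose.mulVec π = 0 ∧ 0 ≤ π ∧ π ≤ 1 ∧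
        D.transpose.mulVec π = A.transpose.mulVec κ ∧
        κ ⬝ᵥ (a - A.mulVec x) = 0 ∧ 0 ≤ κ ∧
        v = π ⬝ᵥ (F.mulVec z - d) + a ⬝ᵥ κ} with hSr
  -- key computation: under the KKT conditions, a ⬝ᵥ κ = π ⬝ᵥ D.mulVec x
  have key : ∀ (x : Fin n → ℝ) (π : Fin p → ℝ) (κ : Fin m → ℝ),
      D.transpose.mulVec π = A.transpose.mulVec κ → κ ⬝ᵥ (a - A.mulVec x) = 0 →
      a ⬝ᵥ κ = π ⬝ᵥ D.mulVec x := by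
    intro x π κ hDA hcomp
    have h1 : κ ⬝ᵥ a = κ ⬝ᵥ A.mulVec x := by
      rw [dotProduct_sub] at hcomp
      linarith
    calc a ⬝ᵥ κ = κ ⬝ᵥ a := dotProduct_comm _ _
      _ = κ ⬝ᵥ A.mulVec x := h1
      _ = A.transpose.mulVec κ ⬝ᵥ x := by
          rw [Matrix.dotProduct_mulVec, Matrix.mulVec_transpose]
      _ = D.transpose.mulVec π ⬝ᵥ x := by rw [hDA]
      _ = π ⬝ᵥ D.mulVec x := by
          rw [Matrix.mulVec_transpose, ← Matrix.dotProduct_mulVec]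
  have hsub : Sr ⊆ Sb := by
    rintro v ⟨x, π, κ, hxa, hE, hπ0, hπ1, hDA, hcomp, hκ0, hv⟩
    exact ⟨x, π, hxa, hE, hπ0, hπ1, by rw [hv, key x π κ hDA hcomp]⟩
  -- v* belongs to Sr
  have hvSr : vstar ∈ Sr := by
    obtain ⟨x₀, πs, hx₀a, hE, hπ0, hπ1, hv⟩ := hvmem
    obtain ⟨xs, hxsa, hgr⟩ := hattain πs hE hπ0 hπ1
    have hle1 : πs ⬝ᵥ D.mulVec x₀ ≤ πs ⬝ᵥ D.mulVec xs := hgr.2 ⟨x₀, hx₀a, rfl⟩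
    have hle2 : πs ⬝ᵥ (F.mulVec z - d) + πs ⬝ᵥ D.mulVec xs ≤ vstar :=
      hvub ⟨xs, πs, hxsa, hE, hπ0, hπ1, rfl⟩
    have heq : πs ⬝ᵥ D.mulVec xs = πs ⬝ᵥ D.mulVec x₀ := by
      rw [hv] at hle2; linarith
    have hopt : ∀ x' : Fin n → ℝ, A.mulVec x' ≤ a →
        D.transpose.mulVec πs ⬝ᵥ x' ≤ D.transpose.mulVec πs ⬝ᵥ xs := by
      intro x' hx'
      have h1 : D.transpose.mulVec πs ⬝ᵥ x' = πs ⬝ᵥ D.mulVec x' := by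
        rw [Matrix.mulVec_transpose, ← Matrix.dotProduct_mulVec]
      have h2 : D.transpose.mulVec πs ⬝ᵥ xs = πs ⬝ᵥ D.mulVec xs := by
        rw [Matrix.mulVec_transpose, ← Matrix.dotProduct_mulVec]
      rw [h1, h2]
      exact hgr.2 ⟨x', hx', rfl⟩
    obtain ⟨κ, hκ0, hAc, hcomp⟩ := exists_kkt A a (D.transpose.mulVec πs) xs hxsa hopt
    refine ⟨xs, πs, κ, hxsa, hE, hπ0, hπ1, hAc.symm, hcomp, hκ0, ?_⟩
    rw [key xs πs κ hAc.symm hcomp, hv]; linarith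
  have hbddb : BddAbove Sb := ⟨vstar, hvub⟩
  have hbddr : BddAbove Sr := hbddb.mono hsub
  have hSbsup : sSup Sb = vstar := IsGreatest.csSup_eq ⟨hvmem, hvub⟩
  apply le_antisymm
  · exact csSup_le_csSup hbddb ⟨vstar, hvSr⟩ hsub
  · rw [hSbsup]
    exact le_csSup hbddr hvSr
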